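/- For any n points on S^N (N ≥ 1), there is an open hemisphere containing at least ⌊(n+1)/2⌋ of the points. -/
import Mathlib

open scoped RealInnerProductSpace

theorem stmt_18 (N : ℕ) (hN : 1 ≤ N) (n : ℕ)
    (x : Fin n → EuclideanSpace ℝ (Fin (N + 1)))
    (hx : ∀ i, ‖x i‖ = 1) :
    ∃ p : EuclideanSpace ℝ (Fin (N + 1)), ‖p‖ = 1 ∧
      (n + 1) / 2 ≤ (Finset.univ.filter fun i => 0 < ⟪x i, p⟫).card := by
  set P : Option (Fin n) → Submodule ℝ (EuclideanSpace ℝ (Fin (N + 1))) := fun o => o.elim ⊥ (fun i => (ℝ ∙ x i)ᗮ) with hP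
  have hv : ∃ v : EuclideanSpace ℝ (Fin (N + 1)), ∀ o, v ∉ P o := by
    by_contra h
    push_neg at h
    have hcov : ⋃ o, ((P o : Set (EuclideanSpace ℝ (Fin (N + 1))))) = Set.univ := by
      ext v; simp only [Set.mem_iUnion, Set.mem_univ, iff_true]
      obtain ⟨o, ho⟩ := h v
      exact ⟨o, ho⟩
    obtain ⟨o, ho⟩ := Subspace.exists_eq_top_of_iUnion_eq_univ hcov
    rcases o with _ | i
    · simp only [hP, Option.elim] at ho
      exact absurd ho (by simp [bot_lt_top.ne])
    · simp only [hP, Option.elim] at ho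
      have : x i ∈ (ℝ ∙ x i)ᗮ := ho ▸ Submodule.mem_top
      rw [Submodule.mem_orthogonal_singleton_iff_inner_right, real_inner_self_eq_norm_sq,
        hx i] at this
      norm_num at this
  obtain ⟨v, hvP⟩ := hv
  have hvne : v ≠ 0 := fun h => hvP none (by simp [hP, h])
  have hvinner : ∀ i, ⟪x i, v⟫ ≠ 0 := fun i h =>
    hvP (some i) (by simpa [hP, Submodule.mem_orthogonal_singleton_iff_inner_right] using h)
  have hvnorm : ‖v‖ ≠ 0 := norm_ne_zero_iff.mpr hvne
  set q : (EuclideanSpace ℝ (Fin (N + 1))) := ‖v‖⁻¹ • v with hq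
  have hqnorm : ‖q‖ = 1 := by
    rw [hq, norm_smul, norm_inv, norm_norm, inv_mul_cancel₀ hvnorm]
  have hqinner : ∀ i, ⟪x i, q⟫ ≠ 0 := fun i => by
    rw [hq, real_inner_smul_right]
    exact mul_ne_zero (inv_ne_zero hvnorm) (hvinner i)
  have hsum : (Finset.univ.filter fun i => 0 < ⟪x i, q⟫).card
      + (Finset.univ.filter fun i => 0 < ⟪x i, -q⟫).card = n := by
    have : (Finset.univ.filter fun i => 0 < ⟪x i, -q⟫) =
        (Finset.univ.filter fun i => ¬ (0 < ⟪x i, q⟫)) := by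
      apply Finset.filter_congr
      intro i _
      rw [inner_neg_right]
      constructor
      · intro h h'; linarith
      · intro h
        rcases lt_trichotomy (⟪x i, q⟫) 0 with h' | h' | h'
        · linarith
        · exact absurd h' (hqinner i)
        · exact absurd h' h
    rw [this, Finset.card_filter_add_card_filter_not, Finset.card_univ, Fintype.card_fin]
  rcases le_or_gt ((n + 1) / 2) ((Finset.univ.filter fun i => 0 < ⟪x i, q⟫).card) with h | h
  · exact ⟨q, hqnorm, h⟩
  · refine ⟨-q, by rw [norm_neg]; exact hqnorm, ?_⟩
    omega
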